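/- (End-component lemma) For every MDP M = (Q, E, δ), every state q ∈ Q, and every strategy σ, the set of plays ρ such that Inf(ρ) is an end-component of M has P_q^σ-probability 1. -/

import Mathlib

open MeasureTheory Filter
open scoped Classical ENNReal

namespace MPP

/-- A Markov decision process: states `Q`, player-1 states `Q1` (the rest are
probabilistic), edge relation `E` with every state having a successor, and a
probabilistic transition function `δ` whose support at every probabilistic state
is exactly the set of successors. -/
structure MDP (Q : Type) where
  Q1 : Set Q
  E : Q → Q → Prop
  E_nonempty : ∀ q, ∃ q', E q q'
  δ : Q → PMF Q
  δ_support : ∀ q, q ∉ Q1 → ∀ q', q' ∈ (δ q).support ↔ E q q'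

/-- A strategy: given the history `h` (the states strictly before the current one)
and the current state `q`, if `q` is a player-1 state it selects a distribution on
successors of `q`. -/
structure Strategy {Q : Type} (M : MDP Q) where
  act : List Q → Q → PMF Q
  act_support : ∀ h q, q ∈ M.Q1 → ∀ q', q' ∈ (act h q).support → M.E q q'

variable {Q : Type}

/-- One step of the history-dependent transition kernel. -/
noncomputable def MDP.step (M : MDP Q) (σ : Strategy M) (h : List Q) (q : Q) : PMF Q :=
  if q ∈ M.Q1 then σ.act h q else M.δ q

/-- Probability of traversing the finite sequence `future` starting at `q` with
past history `h`. -/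
noncomputable def pathProb (M : MDP Q) (σ : Strategy M) : List Q → Q → List Q → ℝ≥0∞
  | _, _, [] => 1
  | h, q, q' :: rest => M.step σ h q q' * pathProb M σ (h ++ [q]) q' rest

/-- `μ` is the trajectory measure (Ionescu–Tulcea) on plays of `M` under strategy
`σ`, starting at `q`: it is the (unique) probability measure on `ℕ → Q` (product
σ-algebra) giving every cylinder its product probability. -/
def IsTrajMeasure [MeasurableSpace Q] (M : MDP Q) (σ : Strategy M) (q : Q)
    (μ : Measure (ℕ → Q)) : Prop :=
  IsProbabilityMeasure μ ∧
    ∀ (n : ℕ) (f : ℕ → Q),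
      μ {ρ | ∀ i ≤ n, ρ i = f i} =
        if f 0 = q then pathProb M σ [] q ((List.range n).map fun i => f (i + 1)) else 0

/-- The set of states occurring infinitely often in a play. -/
def infSet (ρ : ℕ → Q) : Set Q := {s | ∀ N, ∃ n, N ≤ n ∧ ρ n = s}

/-- End-component: nonempty, closed under probabilistic transitions, every state has
a successor inside, and strongly connected inside. -/
def MDP.IsEndComponent (M : MDP Q) (U : Set Q) : Prop :=
  U.Nonempty ∧
    (∀ q ∈ U, q ∉ M.Q1 → (M.δ q).support ⊆ U) ∧
    (∀ q ∈ U, ∃ q' ∈ U, M.E q q') ∧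
    ∀ q ∈ U, ∀ q' ∈ U, Relation.ReflTransGen (fun a b => a ∈ U ∧ b ∈ U ∧ M.E a b) q q'

/-- Energy level of the length-`n` prefix of a play. -/
def EL (w : Q → Q → ℤ) (ρ : ℕ → Q) (n : ℕ) : ℤ :=
  ∑ i ∈ Finset.range n, w (ρ i) (ρ (i + 1))

/-- Mean payoff (liminf of averages) of a play. -/
noncomputable def MP (w : Q → Q → ℤ) (ρ : ℕ → Q) : ℝ :=
  liminf (fun n => (EL w ρ n : ℝ) / n) atTop

/-- Parity objective: the minimal priority visited infinitely often is even. -/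
def ParitySet (p : Q → ℕ) : Set (ℕ → Q) := {ρ | Even (sInf (p '' infSet ρ))}

def MeanPayoffGe (w : Q → Q → ℤ) (ν : ℝ) : Set (ℕ → Q) := {ρ | ν ≤ MP w ρ}

def MeanPayoffGt (w : Q → Q → ℤ) (ν : ℝ) : Set (ℕ → Q) := {ρ | ν < MP w ρ}

/-- Energy objective with initial credit `c₀`. -/
def PosEnergy (w : Q → Q → ℤ) (c₀ : ℕ) : Set (ℕ → Q) :=
  {ρ | ∀ n, 0 ≤ (c₀ : ℤ) + EL w ρ n}

/-- Büchi objective: some state of `B` is visited infinitely often. -/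
def Buchi (B : Set Q) : Set (ℕ → Q) := {ρ | (infSet ρ ∩ B).Nonempty}

/-- Expected mean-payoff value: supremum over strategies of the expectation of the
mean payoff under the trajectory measure. -/
noncomputable def ValMP [MeasurableSpace Q] (M : MDP Q) (w : Q → Q → ℤ) (q : Q) : ℝ :=
  sSup {x | ∃ σ : Strategy M, ∃ μ : Measure (ℕ → Q),
    IsTrajMeasure M σ q μ ∧ x = ∫ ρ, MP w ρ ∂μ}


-- basic lemmas
lemma step_sum [Fintype Q] (M : MDP Q) (σ : Strategy M) (h : List Q) (s : Q) :
    ∑ x, M.step σ h s x = 1 := by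
  rw [← tsum_fintype (L := SummationFilter.unconditional Q)]; exact (M.step σ h s).tsum_coe

lemma step_zero (M : MDP Q) (σ : Strategy M) (h : List Q) {s x : Q} (hx : ¬ M.E s x) :
    M.step σ h s x = 0 := by
  by_contra h0
  unfold MDP.step at h0
  split at h0
  · exact hx (σ.act_support h s ‹_› x (by simpa [PMF.mem_support_iff] using h0))
  · exact hx ((M.δ_support s ‹_› x).1 (by simpa [PMF.mem_support_iff] using h0))

lemma pathProb_fn_zero (M : MDP Q) (σ : Strategy M) :
    ∀ (T : ℕ) (ρ : ℕ → Q) (h : List Q) (n : ℕ), n + 1 ≤ T → ¬ M.E (ρ n) (ρ (n+1)) →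
      pathProb M σ h (ρ 0) (List.ofFn fun i : Fin T => ρ (i+1)) = 0 := by
  intro T
  induction T with
  | zero => intro ρ h n hn; omega
  | succ T ih =>
    intro ρ h n hn hE
    rw [List.ofFn_succ]
    show M.step σ h (ρ 0) (ρ 1) * pathProb M σ (h ++ [ρ 0]) (ρ 1) _ = 0
    rcases Nat.eq_zero_or_pos n with rfl | hpos
    · rw [step_zero M σ h hE, zero_mul]
    · obtain ⟨n', rfl⟩ := Nat.exists_eq_add_of_le hpos
      have := ih (fun i => ρ (i+1)) (h ++ [ρ 0]) n' (by omega) (by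
        simpa [Nat.add_comm 1 n'] using hE)
      have heq : (List.ofFn fun i : Fin T => ρ ((i : ℕ)+1+1)) =
          (List.ofFn fun i : Fin (T+1) => ρ ((i : ℕ)+1)).tail := by
        rw [List.ofFn_succ]; rfl
      rw [show (fun i : Fin T => ρ ((Fin.succ i : Fin (T+1)) + 1)) = fun i : Fin T => ρ ((i:ℕ)+1+1) from funext fun i => by simp [Fin.val_succ]]
      rw [show (fun i : Fin T => ρ ((i:ℕ)+1+1)) = fun i : Fin T => (fun j => ρ (j+1)) ((i:ℕ)+1) from rfl]
      rw [show ρ 1 = (fun j => ρ (j+1)) 0 from rfl, this, mul_zero]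


noncomputable def visits (qa : Q) : List Q → ℕ → Q → ℕ
  | [], _, _ => 0
  | x :: rest, 0, s => (if s = qa then 1 else 0) + visits qa rest 0 x
  | x :: rest, m+1, _ => visits qa rest m x

def avoids (qa qb : Q) : List Q → ℕ → Q → Prop
  | [], _, _ => True
  | x :: rest, 0, s => ¬(s = qa ∧ x = qb) ∧ avoids qa qb rest 0 x
  | x :: rest, m+1, _ => avoids qa qb rest m x

lemma tail_eq (ρ : ℕ → Q) (T : ℕ) : (List.ofFn fun i : Fin T => ρ (((Fin.succ i) : ℕ)+1)) =
    (List.ofFn fun i : Fin T => (fun j => ρ (j+1)) ((i:ℕ)+1)) := by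
  apply congrArg; funext i; simp [Fin.val_succ]

lemma visits_spec (qa : Q) : ∀ (T m : ℕ) (ρ : ℕ → Q),
    visits qa (List.ofFn fun i : Fin T => ρ ((i:ℕ)+1)) m (ρ 0) =
      ∑ n ∈ Finset.range T, (if m ≤ n ∧ ρ n = qa then 1 else 0) := by
  intro T
  induction T with
  | zero => intro m ρ; simp [visits]
  | succ T ih =>
    intro m ρ
    rw [List.ofFn_succ, Finset.sum_range_succ' _ T, tail_eq]
    cases m with
    | zero =>
      simp only [visits]
      rw [show ρ ((0:Fin (T+1)) + 1) = (fun j => ρ (j+1)) 0 by norm_num, ih 0 (fun j => ρ (j+1))]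
      simp [add_comm]
    | succ m' =>
      simp only [visits]
      rw [show ρ ((0:Fin (T+1)) + 1) = (fun j => ρ (j+1)) 0 by norm_num, ih m' (fun j => ρ (j+1))]
      have : ∀ n, ((m' ≤ n ∧ ρ (n+1) = qa) ↔ (m'+1 ≤ n+1 ∧ ρ (n+1) = qa)) := by
        intro n; constructor <;> (rintro ⟨a, b⟩; exact ⟨by omega, b⟩)
      simp only [this]
      simp

lemma avoids_spec (qa qb : Q) : ∀ (T m : ℕ) (ρ : ℕ → Q),
    (∀ n, n < T → m ≤ n → ρ n = qa → ρ (n+1) ≠ qb) →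
    avoids qa qb (List.ofFn fun i : Fin T => ρ ((i:ℕ)+1)) m (ρ 0) := by
  intro T
  induction T with
  | zero => intro m ρ _; simp [avoids]
  | succ T ih =>
    intro m ρ hρ
    rw [List.ofFn_succ, tail_eq]
    cases m with
    | zero =>
      refine ⟨fun ⟨h1, h2⟩ => hρ 0 (by omega) (by omega) h1 (by simpa using h2), ?_⟩
      have := ih 0 (fun j => ρ (j+1)) (fun n hn _ => hρ (n+1) (by omega) (by omega))
      simpa using this
    | succ m' =>
      show avoids qa qb _ m' _
      have := ih m' (fun j => ρ (j+1)) (fun n hn hm => hρ (n+1) (by omega) (by omega))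
      simpa using this


lemma sum_cons [Fintype Q] {T : ℕ} (F : (Fin (T+1) → Q) → ℝ≥0∞) :
    ∑ v : Fin (T+1) → Q, F v = ∑ x : Q, ∑ w : Fin T → Q, F (Fin.cons x w) := by
  rw [← (Fin.consEquiv (fun _ : Fin (T+1) => Q)).sum_comp, Fintype.sum_prod_type]
  rfl

lemma ofn_cons {T : ℕ} (x : Q) (w : Fin T → Q) :
    List.ofFn (Fin.cons x w : Fin (T+1) → Q) = x :: List.ofFn w := by
  rw [List.ofFn_succ]; simp [Fin.cons_succ]

lemma delta_erase_sum [Fintype Q] (M : MDP Q) (qa qb : Q) :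
    ∑ x ∈ Finset.univ.erase qb, M.δ qa x = 1 - M.δ qa qb := by
  refine ENNReal.eq_sub_of_add_eq (PMF.apply_ne_top _ _) ?_
  rw [add_comm, Finset.add_sum_erase _ _ (Finset.mem_univ qb), ← tsum_fintype (L := SummationFilter.unconditional Q)]
  exact (M.δ qa).tsum_coe

lemma ind_le_ind {A B : Prop} [Decidable A] [Decidable B] (h : A → B) : (if A then (1:ℝ≥0∞) else 0) ≤ (if B then 1 else 0) := by
  split
  · rw [if_pos (h ‹A›)]
  · exact zero_le

lemma countBound [Fintype Q] (M : MDP Q) (σ : Strategy M) {qa qb : Q} (hqa : qa ∉ M.Q1) :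
    ∀ (T m k : ℕ) (h : List Q) (s : Q),
    ∑ w : Fin T → Q, (pathProb M σ h s (List.ofFn w) *
      (if k ≤ visits qa (List.ofFn w) m s ∧ avoids qa qb (List.ofFn w) m s then 1 else 0))
    ≤ (1 - M.δ qa qb) ^ k := by
  intro T
  induction T with
  | zero =>
    intro m k h s
    rw [Fintype.sum_eq_single (fun i : Fin 0 => s) (fun w hw => absurd (funext fun i => i.elim0) hw)]
    cases k with
    | zero => simp [pathProb, List.ofFn_zero, visits, avoids]
    | succ k => simp [pathProb, List.ofFn_zero, visits, avoids]
  | succ T ih =>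
    intro m k h s
    rw [sum_cons]
    simp only [ofn_cons]
    have hpp : ∀ (x : Q) (w : Fin T → Q), pathProb M σ h s (x :: List.ofFn w) =
        M.step σ h s x * pathProb M σ (h ++ [s]) x (List.ofFn w) := fun _ _ => rfl
    simp only [hpp, mul_assoc]
    cases m with
    | succ m' =>
      simp only [show ∀ (x : Q) (l : List Q), visits qa (x :: l) (m'+1) s = visits qa l m' x
          from fun _ _ => rfl,
        show ∀ (x : Q) (l : List Q), avoids qa qb (x :: l) (m'+1) s = avoids qa qb l m' x
          from fun _ _ => rfl]
      refine le_trans (Finset.sum_le_sum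
        (g := fun x => M.step σ h s x * (1 - M.δ qa qb) ^ k) fun x _ => ?_) ?_
      · rw [← Finset.mul_sum]
        exact mul_le_mul_right (ih m' k (h ++ [s]) x) (M.step σ h s x)
      · rw [← Finset.sum_mul, step_sum, one_mul]
    | zero =>
      simp only [show ∀ (x : Q) (l : List Q), visits qa (x :: l) 0 s
            = (if s = qa then 1 else 0) + visits qa l 0 x from fun _ _ => rfl,
        show ∀ (x : Q) (l : List Q), avoids qa qb (x :: l) 0 s
            = (¬(s = qa ∧ x = qb) ∧ avoids qa qb l 0 x) from fun _ _ => rfl]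
      by_cases hs : s = qa
      · subst hs
        have hstep : M.step σ h s = M.δ s := if_neg hqa
        have hbound : ∀ x : Q, ∑ w : Fin T → Q, pathProb M σ (h ++ [s]) x (List.ofFn w) *
            (if k ≤ (if s = s then 1 else 0) + visits s (List.ofFn w) 0 x ∧
                (¬(s = s ∧ x = qb) ∧ avoids s qb (List.ofFn w) 0 x) then 1 else 0)
            ≤ if x = qb then 0 else (1 - M.δ s qb) ^ (k-1) := by
          intro x
          by_cases hx : x = qb
          · subst hx
            refine le_trans (le_of_eq (Finset.sum_eq_zero fun w _ => ?_)) (zero_le)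
            rw [if_neg (fun hcon => hcon.2.1 ⟨rfl, rfl⟩), mul_zero]
          · rw [if_neg hx]
            refine le_trans (Finset.sum_le_sum fun w _ => ?_) (ih 0 (k-1) (h ++ [s]) x)
            refine mul_le_mul_right (ind_le_ind fun hc => ?_) _
            refine ⟨?_, hc.2.2⟩
            have := hc.1
            rw [if_pos rfl] at this
            omega
        refine le_trans (Finset.sum_le_sum
          (g := fun x => M.step σ h s x * (if x = qb then 0 else (1 - M.δ s qb) ^ (k-1)))
          fun x _ => ?_) ?_
        · rw [← Finset.mul_sum]
          exact mul_le_mul_right (hbound x) (M.step σ h s x)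
        · rw [← Finset.add_sum_erase _ _ (Finset.mem_univ qb), if_pos rfl, mul_zero, zero_add]
          have hcong : ∀ x ∈ Finset.univ.erase qb,
              M.step σ h s x * (if x = qb then 0 else (1 - M.δ s qb) ^ (k-1))
              = M.δ s x * (1 - M.δ s qb) ^ (k-1) := by
            intro x hx
            rw [if_neg (Finset.ne_of_mem_erase hx), hstep]
          rw [Finset.sum_congr rfl hcong, ← Finset.sum_mul, delta_erase_sum]
          cases k with
          | zero => simpa using mul_le_one' tsub_le_self le_rfl
          | succ k => rw [pow_succ, mul_comm]; simp
      · refine le_trans (Finset.sum_le_sum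
          (g := fun x => M.step σ h s x * (1 - M.δ qa qb) ^ k) fun x _ => ?_) ?_
        · rw [← Finset.mul_sum]
          refine mul_le_mul_right (le_trans (Finset.sum_le_sum fun w _ => ?_)
            (ih 0 k (h ++ [s]) x)) (M.step σ h s x)
          refine mul_le_mul_right (ind_le_ind fun hc => ?_) _
          refine ⟨?_, hc.2.2⟩
          have := hc.1
          rw [if_neg hs] at this
          omega
        · rw [← Finset.sum_mul, step_sum, one_mul]


def extv {n : ℕ} (v : Fin (n+1) → Q) : ℕ → Q :=
  fun i => v ⟨min i n, Nat.lt_succ_of_le (Nat.min_le_right i n)⟩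

lemma extv_le {n : ℕ} (v : Fin (n+1) → Q) {i : ℕ} (h : i ≤ n) :
    extv v i = v ⟨i, Nat.lt_succ_of_le h⟩ := by
  simp only [extv]
  congr 1
  exact Fin.ext (by simp [Nat.min_eq_left h])

lemma measure_le_cylsum [Fintype Q] [MeasurableSpace Q] (μ : Measure (ℕ → Q)) (n : ℕ)
    (S : Set (ℕ → Q)) (hS : ∀ ρ ρ' : ℕ → Q, (∀ i ≤ n, ρ i = ρ' i) → ρ ∈ S → ρ' ∈ S) :
    μ S ≤ ∑ v ∈ Finset.univ.filter (fun v : Fin (n+1) → Q => extv v ∈ S),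
      μ {ρ | ∀ i ≤ n, ρ i = extv v i} := by
  refine le_trans (measure_mono ?_) (measure_biUnion_finset_le _ _)
  intro ρ hρ
  simp only [Set.mem_iUnion, Finset.mem_filter]
  have hagree : ∀ i ≤ n, ρ i = extv (fun j : Fin (n+1) => ρ j) i := by
    intro i hi
    rw [extv_le _ hi]
  exact ⟨fun j : Fin (n+1) => ρ j, ⟨Finset.mem_univ _, hS ρ _ hagree hρ⟩, hagree⟩

lemma ofn_succ_tail {T : ℕ} (v : Fin (T+1) → Q) :
    (List.ofFn fun i : Fin T => extv v ((i:ℕ)+1)) = List.ofFn (fun i : Fin T => v i.succ) := by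
  apply congrArg
  funext i
  rw [extv_le _ (by omega : (i:ℕ)+1 ≤ T)]
  congr 1

section Meas
variable [Fintype Q] [MeasurableSpace Q] [MeasurableSingletonClass Q]

lemma meas_eq_state (n : ℕ) (c : Q) : MeasurableSet {ρ : ℕ → Q | ρ n = c} := by
  have : {ρ : ℕ → Q | ρ n = c} = (fun ρ : ℕ → Q => ρ n) ⁻¹' {c} := rfl
  rw [this]
  exact (measurable_pi_apply n) (measurableSet_singleton c)

/-- The counting function. -/
noncomputable def cnt (qa : Q) (m T : ℕ) (ρ : ℕ → Q) : ℕ :=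
  ∑ n ∈ Finset.range T, (if m ≤ n ∧ ρ n = qa then 1 else 0)

lemma cnt_mono (qa : Q) (m : ℕ) {T T' : ℕ} (h : T ≤ T') (ρ : ℕ → Q) :
    cnt qa m T ρ ≤ cnt qa m T' ρ :=
  Finset.sum_le_sum_of_subset (Finset.range_subset_range.2 h)

/-- The event: at least `k` visits to `qa` in `[m, T)`, and every visit to `qa`
at a time in `[m, T)` is not followed by `qb`. -/
def Dset (qa qb : Q) (m k T : ℕ) : Set (ℕ → Q) :=
  {ρ | k ≤ cnt qa m T ρ ∧ ∀ n, n < T → m ≤ n → ρ n = qa → ρ (n+1) ≠ qb}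

lemma measurable_cnt (qa : Q) (m T : ℕ) : Measurable (cnt qa m T) := by
  apply Finset.measurable_sum
  intro n _
  have : MeasurableSet {ρ : ℕ → Q | m ≤ n ∧ ρ n = qa} := by
    by_cases hm : m ≤ n
    · have : {ρ : ℕ → Q | m ≤ n ∧ ρ n = qa} = {ρ | ρ n = qa} := by
        ext ρ; simp [hm]
      rw [this]; exact meas_eq_state n qa
    · have : {ρ : ℕ → Q | m ≤ n ∧ ρ n = qa} = ∅ := by
        ext ρ; simp [hm]
      rw [this]; exact MeasurableSet.empty
    
  exact Measurable.ite this measurable_const measurable_const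

lemma measurable_Dset (qa qb : Q) (m k T : ℕ) : MeasurableSet (Dset qa qb m k T) := by
  apply MeasurableSet.inter
  · exact measurable_cnt qa m T (MeasurableSet.of_discrete (s := Set.Ici k))
  · show MeasurableSet {ρ : ℕ → Q | ∀ n, n < T → m ≤ n → ρ n = qa → ρ (n+1) ≠ qb}
    have : {ρ : ℕ → Q | ∀ n, n < T → m ≤ n → ρ n = qa → ρ (n+1) ≠ qb} =
        ⋂ n, ⋂ (_ : n < T ∧ m ≤ n), ({ρ | ρ n = qa} ∩ {ρ | ρ (n+1) = qb})ᶜ := by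
      ext ρ
      simp only [Set.mem_iInter, Set.mem_setOf_eq, Set.mem_compl_iff, Set.mem_inter_iff]
      constructor
      · rintro h n ⟨h1, h2⟩ ⟨h3, h4⟩; exact h n h1 h2 h3 h4
      · intro h n h1 h2 h3 h4; exact h n ⟨h1, h2⟩ ⟨h3, h4⟩
    rw [this]
    exact MeasurableSet.iInter fun n => MeasurableSet.iInter fun _ =>
      ((meas_eq_state n qa).inter (meas_eq_state (n+1) qb)).compl

end Meas



lemma range_map_eq_ofFn (g : ℕ → Q) (n : ℕ) :
    (List.range n).map g = List.ofFn (fun i : Fin n => g i) := by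
  apply List.ext_getElem <;> simp

section Main
variable [Fintype Q] [MeasurableSpace Q] [MeasurableSingletonClass Q]
variable {M : MDP Q} {σ : Strategy M} {q : Q} {μ : Measure (ℕ → Q)}

lemma measure_Dset_le (hμ : IsTrajMeasure M σ q μ) {qa qb : Q} (hqa : qa ∉ M.Q1)
    (m k T : ℕ) : μ (Dset qa qb m k T) ≤ (1 - M.δ qa qb) ^ k := by
  have hS : ∀ ρ ρ' : ℕ → Q, (∀ i ≤ T, ρ i = ρ' i) → ρ ∈ Dset qa qb m k T → ρ' ∈ Dset qa qb m k T := by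
    intro ρ ρ' hag ⟨h1, h2⟩
    constructor
    · have : cnt qa m T ρ = cnt qa m T ρ' := by
        apply Finset.sum_congr rfl
        intro n hn
        rw [hag n (le_of_lt (by simpa using Finset.mem_range.1 hn))]
      rwa [← this]
    · intro n hn hm he
      have e1 : ρ n = qa := by rw [hag n (by omega)]; exact he
      have := h2 n hn hm e1
      rwa [hag (n+1) (by omega)] at this
  refine le_trans (measure_le_cylsum μ T _ hS) ?_
  -- rewrite each cylinder measure via the trajectory property
  have hcyl : ∀ v : Fin (T+1) → Q, μ {ρ | ∀ i ≤ T, ρ i = extv v i} =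
      if extv v 0 = q then pathProb M σ [] q ((List.range T).map fun i => extv v (i+1)) else 0 :=
    fun v => hμ.2 T (extv v)
  set G : (Fin (T+1) → Q) → ℝ≥0∞ := fun v =>
    if v 0 = q then pathProb M σ [] q (List.ofFn fun i : Fin T => v i.succ) *
      (if k ≤ visits qa (List.ofFn fun i : Fin T => v i.succ) m q ∧
          avoids qa qb (List.ofFn fun i : Fin T => v i.succ) m q then 1 else 0)
    else 0 with hG
  have hle : ∑ v ∈ Finset.univ.filter (fun v : Fin (T+1) → Q => extv v ∈ Dset qa qb m k T),
      μ {ρ | ∀ i ≤ T, ρ i = extv v i} ≤ ∑ v : Fin (T+1) → Q, G v := by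
    refine le_trans (Finset.sum_le_sum fun v hv => ?_) (Finset.sum_le_sum_of_subset (Finset.filter_subset _ _))
    rw [hcyl v]
    have hv0 : extv v 0 = v 0 := extv_le v (Nat.zero_le T)
    by_cases hq : v 0 = q
    · rw [if_pos (by rw [hv0, hq]), hG]
      simp only [if_pos hq]
      have hword : ((List.range T).map fun i => extv v (i+1)) = List.ofFn (fun i : Fin T => v i.succ) := by
        rw [range_map_eq_ofFn, ofn_succ_tail]
      rw [hword]
      have hmem := (Finset.mem_filter.1 hv).2
      have hv' : extv v ∈ Dset qa qb m k T := hmem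
      have hvis : k ≤ visits qa (List.ofFn fun i : Fin T => v i.succ) m q := by
        have := visits_spec qa T m (extv v)
        rw [ofn_succ_tail] at this
        rw [← hq, ← hv0]
        rw [this]
        exact hv'.1
      have hav : avoids qa qb (List.ofFn fun i : Fin T => v i.succ) m q := by
        have := avoids_spec qa qb T m (extv v) (fun n h1 h2 => hv'.2 n h1 h2)
        rw [ofn_succ_tail] at this
        rw [← hq, ← hv0]
        exact this
      rw [if_pos ⟨hvis, hav⟩, mul_one]
    · rw [if_neg (by rwa [hv0]), hG]
      simp only [if_neg hq]
      exact le_rfl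
  refine le_trans hle ?_
  rw [sum_cons]
  have hEq : ∀ x : Q, ∑ w : Fin T → Q, G (Fin.cons x w) =
      if x = q then ∑ w : Fin T → Q, (pathProb M σ [] q (List.ofFn w) *
        (if k ≤ visits qa (List.ofFn w) m q ∧ avoids qa qb (List.ofFn w) m q then 1 else 0)) else 0 := by
    intro x
    have hw : ∀ w : Fin T → Q, (List.ofFn fun i : Fin T => (Fin.cons x w : Fin (T+1) → Q) i.succ)
        = List.ofFn w := by
      intro w; apply congrArg; funext i; rw [Fin.cons_succ]
    by_cases hx : x = q
    · rw [if_pos hx]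
      apply Finset.sum_congr rfl
      intro w _
      rw [hG]
      simp only [Fin.cons_zero, if_pos hx, hw w]
    · rw [if_neg hx]
      apply Finset.sum_eq_zero
      intro w _
      rw [hG]
      simp only [Fin.cons_zero, if_neg hx]
  rw [Finset.sum_congr rfl (fun x _ => hEq x), Finset.sum_ite_eq' Finset.univ q, if_pos (Finset.mem_univ q)]
  exact countBound M σ hqa T m k [] q




def badPair (qa qb : Q) : Set (ℕ → Q) :=
  {ρ | (∀ N, ∃ n, N ≤ n ∧ ρ n = qa) ∧ ∃ m, ∀ n, m ≤ n → ρ n = qa → ρ (n+1) ≠ qb}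

lemma measure_badPair_zero (hμ : IsTrajMeasure M σ q μ) {qa qb : Q} (hqa : qa ∉ M.Q1)
    (hqb : M.δ qa qb ≠ 0) : μ (badPair qa qb) = 0 := by
  have hlt : (1 : ℝ≥0∞) - M.δ qa qb < 1 :=
    ENNReal.sub_lt_self ENNReal.one_ne_top one_ne_zero hqb
  set Nm : ℕ → Set (ℕ → Q) := fun m =>
    {ρ | (∀ N, ∃ n, N ≤ n ∧ ρ n = qa) ∧ ∀ n, m ≤ n → ρ n = qa → ρ (n+1) ≠ qb} with hNmdef
  have hNm : ∀ m : ℕ, μ (Nm m) = 0 := by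
    intro m
    have hk : ∀ k : ℕ, μ (Nm m) ≤ (1 - M.δ qa qb) ^ k := by
      intro k
      set I : ℕ → Set (ℕ → Q) := fun T₀ => ⋂ T, ⋂ (_ : T₀ ≤ T), Dset qa qb m k T with hI
      have hsub : Nm m ⊆ ⋃ T₀, I T₀ := by
        intro ρ hρ
        have hcount : ∀ k' : ℕ, ∃ T₀, k' ≤ cnt qa m T₀ ρ := by
          intro k'
          induction k' with
          | zero => exact ⟨0, Nat.zero_le _⟩
          | succ k' ih =>
            obtain ⟨T₀, hT₀⟩ := ih
            obtain ⟨n, hn, hn2⟩ := hρ.1 (max T₀ m)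
            refine ⟨n+1, ?_⟩
            have h1 : cnt qa m T₀ ρ ≤ cnt qa m n ρ :=
              cnt_mono qa m (le_trans (le_max_left _ _) hn) ρ
            have h2 : cnt qa m (n+1) ρ = cnt qa m n ρ + (if m ≤ n ∧ ρ n = qa then 1 else 0) :=
              Finset.sum_range_succ _ n
            rw [h2, if_pos ⟨le_trans (le_max_right _ _) hn, hn2⟩]
            omega
        obtain ⟨T₀, hT₀⟩ := hcount k
        refine Set.mem_iUnion.2 ⟨T₀, ?_⟩
        refine Set.mem_iInter.2 fun T => Set.mem_iInter.2 fun hT =>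
          ⟨le_trans hT₀ (cnt_mono qa m hT ρ), fun n _ => hρ.2 n⟩
      have hmono : Monotone I := by
        intro a b hab ρ hρ
        exact Set.mem_iInter.2 fun T => Set.mem_iInter.2 fun hT =>
          Set.mem_iInter.1 (Set.mem_iInter.1 hρ T) (le_trans hab hT)
      calc μ (Nm m) ≤ μ (⋃ T₀, I T₀) := measure_mono hsub
        _ = ⨆ T₀, μ (I T₀) := Directed.measure_iUnion hmono.directed_le
        _ ≤ (1 - M.δ qa qb) ^ k := by
            refine iSup_le fun T₀ => le_trans (measure_mono ?_) (measure_Dset_le hμ hqa m k T₀)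
            intro ρ hρ
            exact Set.mem_iInter.1 (Set.mem_iInter.1 hρ T₀) le_rfl
    have htend : Filter.Tendsto (fun k : ℕ => (1 - M.δ qa qb) ^ k) atTop (nhds 0) :=
      ENNReal.tendsto_pow_atTop_nhds_zero_of_lt_one hlt
    exact le_antisymm (ge_of_tendsto' htend hk) (zero_le)
  have hsub2 : badPair qa qb ⊆ ⋃ m, Nm m := by
    rintro ρ ⟨h1, m, h2⟩
    exact Set.mem_iUnion.2 ⟨m, h1, h2⟩
  refine le_antisymm (le_trans (measure_mono hsub2) (le_trans (measure_iUnion_le _) ?_)) (zero_le)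
  simp [hNm]

lemma measure_nonedge_zero (hμ : IsTrajMeasure M σ q μ) (n : ℕ) :
    μ {ρ | ¬ M.E (ρ n) (ρ (n+1))} = 0 := by
  have hS : ∀ ρ ρ' : ℕ → Q, (∀ i ≤ n+1, ρ i = ρ' i) →
      ρ ∈ {ρ : ℕ → Q | ¬ M.E (ρ n) (ρ (n+1))} → ρ' ∈ {ρ : ℕ → Q | ¬ M.E (ρ n) (ρ (n+1))} := by
    intro ρ ρ' hag h
    rwa [Set.mem_setOf_eq, ← hag n (by omega), ← hag (n+1) (by omega)]
  have hmain := measure_le_cylsum μ (n+1) _ hS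
  refine le_antisymm (le_trans hmain
    (le_of_eq (Finset.sum_eq_zero fun v hv => ?_))) (zero_le)
  rw [hμ.2 (n+1) (extv v)]
  by_cases hq : extv v 0 = q
  · rw [if_pos hq, range_map_eq_ofFn]
    have hmem : ¬ M.E (extv v n) (extv v (n+1)) := by
      have := hv
      simp only [Finset.mem_filter, Set.mem_setOf_eq] at this
      exact this.2
    have := pathProb_fn_zero M σ (n+1) (extv v) [] n le_rfl hmem
    rw [← hq]
    exact this
  · rw [if_neg hq]






lemma infSet_nonempty [Fintype Q] (ρ : ℕ → Q) : (infSet ρ).Nonempty := by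
  by_contra hcon
  rw [Set.not_nonempty_iff_eq_empty] at hcon
  have h : ∀ s : Q, ∃ N, ∀ n, N ≤ n → ρ n ≠ s := by
    intro s
    have : s ∉ infSet ρ := by rw [hcon]; exact Set.notMem_empty s
    simp only [infSet, Set.mem_setOf_eq, not_forall, not_exists, not_and] at this
    exact this
  choose N hN using h
  set K := Finset.univ.sup N with hK
  exact hN (ρ K) K (Finset.le_sup (Finset.mem_univ _)) rfl

lemma infSet_eventual [Fintype Q] (ρ : ℕ → Q) : ∃ N, ∀ n, N ≤ n → ρ n ∈ infSet ρ := by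
  have h : ∀ s : Q, ∃ N, s ∉ infSet ρ → ∀ n, N ≤ n → ρ n ≠ s := by
    intro s
    by_cases hs : s ∈ infSet ρ
    · exact ⟨0, fun c => absurd hs c⟩
    · have := hs
      simp only [infSet, Set.mem_setOf_eq, not_forall, not_exists, not_and] at this
      obtain ⟨N, hN⟩ := this
      exact ⟨N, fun _ => hN⟩
  choose N hN using h
  refine ⟨Finset.univ.sup N, fun n hn => ?_⟩
  by_contra hni
  exact hN (ρ n) hni n (le_trans (Finset.le_sup (Finset.mem_univ _)) hn) rfl

lemma deterministic_ec [Fintype Q] (M : MDP Q) (ρ : ℕ → Q)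
    (hE : ∀ n, M.E (ρ n) (ρ (n+1)))
    (hB : ∀ qa qb : Q, qa ∉ M.Q1 → M.δ qa qb ≠ 0 → ρ ∉ badPair qa qb) :
    M.IsEndComponent (infSet ρ) := by
  obtain ⟨N, hN⟩ := infSet_eventual ρ
  have hclosure : ∀ qa qb : Q, qa ∈ infSet ρ → qa ∉ M.Q1 → M.δ qa qb ≠ 0 → qb ∈ infSet ρ := by
    intro qa qb hio hq1 hδ
    have hb := hB qa qb hq1 hδ
    simp only [badPair, Set.mem_setOf_eq, not_and, not_exists, not_forall] at hb
    have := hb hio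
    intro N'
    obtain ⟨n, hn1, hn2, hn3⟩ := this N'
    push_neg at hn3
    exact ⟨n+1, by omega, hn3⟩
  refine ⟨infSet_nonempty ρ, ?_, ?_, ?_⟩
  · intro qa hqa hq1 qb hqb
    exact hclosure qa qb hqa hq1 (by rwa [PMF.mem_support_iff] at hqb)
  · intro qa hqa
    obtain ⟨n, hn1, hn2⟩ := hqa N
    refine ⟨ρ (n+1), hN (n+1) (by omega), ?_⟩
    rw [← hn2]
    exact hE n
  · intro s hs t ht
    have claim : ∀ n m : ℕ, N ≤ n → n ≤ m →
        Relation.ReflTransGen (fun a b => a ∈ infSet ρ ∧ b ∈ infSet ρ ∧ M.E a b) (ρ n) (ρ m) := by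
      intro n m hNn hnm
      induction m, hnm using Nat.le_induction with
      | base => exact Relation.ReflTransGen.refl
      | succ m hm ih =>
        exact Relation.ReflTransGen.tail ih
          ⟨hN m (by omega), hN (m+1) (by omega), hE m⟩
    obtain ⟨n, hn1, hn2⟩ := hs N
    obtain ⟨m, hm1, hm2⟩ := ht n
    have := claim n m hn1 hm1
    rwa [hn2, hm2] at this


end Main

/-- End-component lemma: with probability 1 the set of states visited infinitely
often is an end-component. -/
theorem end_component_lemma [Fintype Q] [Nonempty Q]
    [MeasurableSpace Q] [MeasurableSingletonClass Q]
    (M : MDP Q) (q : Q) (σ : Strategy M) (μ : Measure (ℕ → Q))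
    (hμ : IsTrajMeasure M σ q μ) :
    μ {ρ | M.IsEndComponent (infSet ρ)} = 1 := by
  have hprob : IsProbabilityMeasure μ := hμ.1
  set Z : Set (ℕ → Q) := (⋃ n : ℕ, {ρ : ℕ → Q | ¬ M.E (ρ n) (ρ (n+1))}) ∪
    (⋃ pr : Q × Q, if pr.1 ∉ M.Q1 ∧ M.δ pr.1 pr.2 ≠ 0 then badPair pr.1 pr.2 else ∅) with hZdef
  have hZ : μ Z = 0 := by
    refine le_antisymm (le_trans (measure_union_le _ _) ?_) (zero_le)
    have h1 : μ (⋃ n : ℕ, {ρ : ℕ → Q | ¬ M.E (ρ n) (ρ (n+1))}) = 0 := by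
      refine le_antisymm (le_trans (measure_iUnion_le _) ?_) (zero_le)
      simp [measure_nonedge_zero hμ]
    have h2 : μ (⋃ pr : Q × Q, if pr.1 ∉ M.Q1 ∧ M.δ pr.1 pr.2 ≠ 0 then badPair pr.1 pr.2 else ∅) = 0 := by
      refine le_antisymm (le_trans (measure_iUnion_le _) ?_) (zero_le)
      have : ∀ pr : Q × Q, μ (if pr.1 ∉ M.Q1 ∧ M.δ pr.1 pr.2 ≠ 0 then badPair pr.1 pr.2 else ∅) = 0 := by
        intro pr
        split <;> rename_i hc
        · exact measure_badPair_zero hμ hc.1 hc.2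
        · exact measure_empty
      simp [this]
    rw [h1, h2, add_zero]
  have hsub : {ρ | M.IsEndComponent (infSet ρ)}ᶜ ⊆ Z := by
    intro ρ hρ
    by_contra hz
    apply hρ
    rw [hZdef] at hz
    simp only [Set.mem_union, Set.mem_iUnion, not_or, not_exists] at hz
    obtain ⟨hz1, hz2⟩ := hz
    refine deterministic_ec M ρ (fun n => by have := hz1 n; simpa using this) ?_
    intro qa qb hq1 hδ hbad
    have := hz2 (qa, qb)
    rw [if_pos ⟨hq1, hδ⟩] at this
    exact this hbad
  refine le_antisymm prob_le_one ?_
  have : (1:ℝ≥0∞) = μ Set.univ := (measure_univ).symm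
  rw [this, show (Set.univ : Set (ℕ → Q)) = {ρ | M.IsEndComponent (infSet ρ)} ∪ {ρ | M.IsEndComponent (infSet ρ)}ᶜ from (Set.union_compl_self _).symm]
  refine le_trans (measure_union_le _ _) ?_
  have : μ ({ρ | M.IsEndComponent (infSet ρ)}ᶜ) = 0 :=
    le_antisymm (le_trans (measure_mono hsub) (le_of_eq hZ)) (zero_le)
  rw [this, add_zero]


end MPP
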